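/- Let G be a torsion-free group and F ⊆ P(G) a left-invariant ideal. Then for every limit ordinal α the family τ^{<α}(F) = ⋃_{β<α} τ^β(F) is additive (closed under finite unions). In particular the thin-completion τ*(F) is an ideal on G. -/

import Mathlib

open Pointwise

/-- A family of subsets of `G` is left-invariant if it is closed under left translations. -/
def LeftInvariant {G : Type} [Group G] (F : Set (Set G)) : Prop :=
  ∀ A ∈ F, ∀ x : G, x • A ∈ F

/-- A family of subsets is lower if it is closed under taking subsets. -/
def Lower {G : Type} [Group G] (F : Set (Set G)) : Prop :=
  ∀ A B : Set G, A ⊆ B → B ∈ F → A ∈ F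

/-- `tauOp F = τ(F)` is the family of `F`-thin sets. -/
def tauOp {G : Type} [Group G] (F : Set (Set G)) : Set (Set G) :=
  {A | ∀ x y : G, x ≠ y → x • A ∩ y • A ∈ F}

/-- A family is thin-complete if `τ(F) = F`. -/
def ThinComplete {G : Type} [Group G] (F : Set (Set G)) : Prop := tauOp F = F

/-- The thin-completion `τ*(F)`: the smallest thin-complete family containing `F`. -/
def tauStar {G : Type} [Group G] (F : Set (Set G)) : Set (Set G) :=
  ⋂₀ {T : Set (Set G) | F ⊆ T ∧ ThinComplete T}

/-- The transfinite iterates `τ^α(F)`. -/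
noncomputable def tauIter {G : Type} [Group G] (F : Set (Set G)) : Ordinal → Set (Set G) :=
  Ordinal.lt_wf.fix fun α ih =>
    if α = 0 then F
    else {A | ∀ x y : G, x ≠ y → ∃ β, ∃ h : β < α, x • A ∩ y • A ∈ ih β h}

/-- `τ^{<α}(F) = ⋃_{β<α} τ^β(F)`. -/
noncomputable def tauLT {G : Type} [Group G] (F : Set (Set G)) (α : Ordinal) : Set (Set G) :=
  {A | ∃ β < α, A ∈ tauIter F β}

namespace TauAux

variable {G : Type} [Group G]

theorem tauIter_unfold (F : Set (Set G)) (α : Ordinal) :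
    tauIter F α = if α = 0 then F
      else {A | ∀ x y : G, x ≠ y → ∃ β, ∃ _ : β < α, x • A ∩ y • A ∈ tauIter F β} :=
  WellFounded.fix_eq _ _ _

theorem tauIter_zero (F : Set (Set G)) : tauIter F 0 = F := by
  rw [tauIter_unfold]; simp

theorem mem_tauIter_of_pos {F : Set (Set G)} {α : Ordinal} (hα : α ≠ 0) {A : Set G}
    (h : ∀ x y : G, x ≠ y → ∃ β, β < α ∧ x • A ∩ y • A ∈ tauIter F β) :
    A ∈ tauIter F α := by
  rw [tauIter_unfold, if_neg hα]
  intro x y hxy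
  obtain ⟨β, h1, h2⟩ := h x y hxy
  exact ⟨β, h1, h2⟩

theorem tauIter_pos_spec {F : Set (Set G)} {α : Ordinal} (hα : α ≠ 0) {A : Set G}
    (hA : A ∈ tauIter F α) {x y : G} (hxy : x ≠ y) :
    ∃ β, β < α ∧ x • A ∩ y • A ∈ tauIter F β := by
  rw [tauIter_unfold, if_neg hα] at hA
  obtain ⟨β, h1, h2⟩ := hA x y hxy
  exact ⟨β, h1, h2⟩

theorem tauIter_mono {F : Set (Set G)} (hli : LeftInvariant F) (hlo : Lower F)
    {α γ : Ordinal} (h : α ≤ γ) : tauIter F α ⊆ tauIter F γ := by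
  rcases eq_or_lt_of_le h with rfl | hlt
  · exact subset_rfl
  intro A hA
  have hγ : γ ≠ 0 := fun h0 => by simp [h0] at hlt
  rcases eq_or_ne α 0 with rfl | hα
  · rw [tauIter_zero] at hA
    apply mem_tauIter_of_pos hγ
    intro x y hxy
    refine ⟨0, pos_iff_ne_zero.mpr hγ, ?_⟩
    rw [tauIter_zero]
    exact hlo _ _ Set.inter_subset_left (hli A hA x)
  · apply mem_tauIter_of_pos hγ
    intro x y hxy
    obtain ⟨β, hβ, hm⟩ := tauIter_pos_spec hα hA hxy
    exact ⟨β, hβ.trans hlt, hm⟩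

theorem tauIter_lower {F : Set (Set G)} (hlo : Lower F) :
    ∀ α, ∀ A B : Set G, A ⊆ B → B ∈ tauIter F α → A ∈ tauIter F α := by
  intro α
  induction α using Ordinal.induction with
  | _ α IH =>
  intro A B hAB hB
  rcases eq_or_ne α 0 with rfl | hα
  · rw [tauIter_zero] at *; exact hlo A B hAB hB
  · apply mem_tauIter_of_pos hα
    intro x y hxy
    obtain ⟨β, hβ, hm⟩ := tauIter_pos_spec hα hB hxy
    exact ⟨β, hβ, IH β hβ _ _
      (Set.inter_subset_inter (Set.smul_set_mono hAB) (Set.smul_set_mono hAB)) hm⟩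

end TauAux

namespace TauAux2

variable {G : Type} [Group G]

theorem eq_one_of_smul_sub (htf : ∀ g : G, g ≠ 1 → ¬IsOfFinOrder g) {g : G} {T : Finset G}
    (hT : T.Nonempty) (h : ∀ t ∈ T, g * t ∈ T) : g = 1 := by
  by_contra hg
  obtain ⟨t0, ht0⟩ := hT
  have hp : ∀ k : ℕ, g ^ k * t0 ∈ T := by
    intro k; induction k with
    | zero => simpa using ht0
    | succ k ih =>
      rw [pow_succ', mul_assoc]
      exact h _ ih
  obtain ⟨i, _, j, _, hij, hfe⟩ := Finset.exists_ne_map_eq_of_card_lt_of_maps_to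
    (s := Finset.range (T.card + 1)) (t := T) (by simp) (fun k _ => hp k)
  have hpe : g ^ i = g ^ j := mul_right_cancel hfe
  rcases Nat.lt_or_ge i j with hlt | hge
  · have : g ^ (j - i) * g ^ i = g ^ j := by rw [← pow_add]; congr 1; omega
    have h1 : g ^ (j - i) = 1 := by
      have := this.trans hpe.symm
      calc g ^ (j-i) = g ^ (j-i) * g ^ i * (g ^ i)⁻¹ := by group
        _ = g ^ i * (g^i)⁻¹ := by rw [this]
        _ = 1 := by group
    exact htf g hg (isOfFinOrder_iff_pow_eq_one.mpr ⟨j - i, by omega, h1⟩)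
  · have hlt : j < i := by omega
    have : g ^ (i - j) * g ^ j = g ^ i := by rw [← pow_add]; congr 1; omega
    have h1 : g ^ (i - j) = 1 := by
      have := this.trans hpe
      calc g ^ (i-j) = g ^ (i-j) * g ^ j * (g ^ j)⁻¹ := by group
        _ = g ^ j * (g^j)⁻¹ := by rw [this]
        _ = 1 := by group
    exact htf g hg (isOfFinOrder_iff_pow_eq_one.mpr ⟨i - j, by omega, h1⟩)

theorem card_lt_union_smul [DecidableEq G] (htf : ∀ g : G, g ≠ 1 → ¬IsOfFinOrder g) {x y : G} (hxy : x ≠ y)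
    (T : Finset G) (hT : T.Nonempty) :
    T.card < ((x • T) ∪ (y • T)).card := by
  classical
  by_contra hle
  push_neg at hle
  have h1 : x • T ⊆ x • T ∪ y • T := Finset.subset_union_left
  have h2 : x • T = x • T ∪ y • T :=
    Finset.eq_of_subset_of_card_le h1 (by rw [Finset.card_smul_finset]; exact hle)
  have h3 : y • T ⊆ x • T := h2 ▸ Finset.subset_union_right
  have h4 : ∀ t ∈ T, (x⁻¹ * y) * t ∈ T := by
    intro t ht
    have : y • t ∈ x • T := h3 (Finset.smul_mem_smul_finset ht)
    rw [Finset.mem_smul_finset] at this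
    obtain ⟨s, hs, hst⟩ := this
    have : (x⁻¹ * y) * t = s := by
      simp only [smul_eq_mul] at hst
      rw [mul_assoc, ← hst]; group
    rwa [this]
  have := TauAux2.eq_one_of_smul_sub htf hT h4
  exact hxy (inv_mul_eq_one.mp this)

end TauAux2

namespace TauAux3

def P (n : ℕ) : ℕ := n * (2 * (n + 1)) * (2 * (n + 1))

theorem P_mono {q q' : ℕ} (h : q ≤ q') : P q ≤ P q' := by
  unfold P; gcongr <;> omega

theorem le_P (q : ℕ) : q ≤ P q := by
  unfold P
  calc q ≤ q * (2 * (q + 1)) := Nat.le_mul_of_pos_right q (by omega)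
    _ ≤ q * (2 * (q + 1)) * (2 * (q + 1)) := Nat.le_mul_of_pos_right _ (by omega)

noncomputable def CC : Ordinal → ℕ → ℕ := fun m =>
  Ordinal.limitRecOn m (fun _ => 0) (fun _ ih n => P n + ih (P n)) (fun _ _ _ => fun _ => 0)

theorem CC_zero (n : ℕ) : CC 0 n = 0 := by
  simp [CC, Ordinal.limitRecOn_zero]

theorem CC_succ (μ : Ordinal) (n : ℕ) : CC (Order.succ μ) n = P n + CC μ (P n) := by
  simp [CC, Ordinal.limitRecOn_succ]

theorem CC_limit {m : Ordinal} (h : Order.IsSuccLimit m) (n : ℕ) : CC m n = 0 := by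
  simp [CC, Ordinal.limitRecOn_limit _ _ _ _ h]

theorem CC_mono : ∀ m : Ordinal, ∀ {q q' : ℕ}, q ≤ q' → CC m q ≤ CC m q' := by
  intro m
  induction m using Ordinal.induction with
  | _ m IH =>
  intro q q' h
  rcases Ordinal.zero_or_succ_or_isSuccLimit m with rfl | ⟨μ, rfl⟩ | hl
  · simp [CC_zero]
  · rw [CC_succ, CC_succ]
    exact Nat.add_le_add (P_mono h) (IH μ (Order.lt_succ μ) (P_mono h))
  · simp [CC_limit hl]

theorem limadd {m m' : Ordinal} (hm : Order.IsSuccLimit m) (hm' : m' < m) (k : ℕ) :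
    m' + (k : Ordinal) < m := by
  induction k with
  | zero => simpa using hm'
  | succ k ih =>
    have he : m' + ((k+1 : ℕ) : Ordinal) = Order.succ (m' + (k : ℕ)) := by
      rw [← Ordinal.add_one_eq_succ]
      push_cast
      exact (add_assoc _ _ _).symm
    rw [he]
    exact hm.succ_lt ih

theorem succ_add_nat (μ : Ordinal) (a : ℕ) :
    Order.succ μ + (a : Ordinal) = μ + ((1 + a : ℕ) : Ordinal) := by
  rw [← Ordinal.add_one_eq_succ]
  push_cast
  exact add_assoc _ _ _

theorem MONO : ∀ m m' : Ordinal, m' ≤ m → ∀ q : ℕ,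
    m' + ((CC m' q + q : ℕ) : Ordinal) ≤ m + ((CC m q + q : ℕ) : Ordinal) := by
  intro m
  induction m using Ordinal.induction with
  | _ m IH =>
  intro m' hle q
  rcases eq_or_lt_of_le hle with rfl | hlt
  · exact le_rfl
  rcases Ordinal.zero_or_succ_or_isSuccLimit m with rfl | ⟨μ, rfl⟩ | hl
  · exact absurd hlt (not_lt_of_ge zero_le)
  · have h1 : m' ≤ μ := Order.lt_succ_iff.mp hlt
    refine le_trans (IH μ (Order.lt_succ μ) m' h1 q) ?_
    rw [succ_add_nat]
    apply add_le_add_right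
    rw [Nat.cast_le, CC_succ]
    have := CC_mono μ (le_P q)
    omega
  · exact le_trans (limadd hl hlt _).le (le_self_add)

theorem KEY {m m' : Ordinal} (hlt : m' < m) {n n' : ℕ} (hn' : n' ≤ P n) :
    m' + ((CC m' n' + n' : ℕ) : Ordinal) ≤ m + ((CC m n : ℕ) : Ordinal) := by
  have step1 : m' + ((CC m' n' + n' : ℕ) : Ordinal)
      ≤ m' + ((CC m' (P n) + P n : ℕ) : Ordinal) := by
    apply add_le_add_right
    rw [Nat.cast_le]
    have := CC_mono m' hn'
    omega
  refine le_trans step1 ?_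
  rcases Ordinal.zero_or_succ_or_isSuccLimit m with rfl | ⟨μ, rfl⟩ | hl
  · exact absurd hlt (not_lt_of_ge zero_le)
  · have h1 : m' ≤ μ := Order.lt_succ_iff.mp hlt
    refine le_trans (MONO μ m' h1 (P n)) ?_
    rw [succ_add_nat]
    apply add_le_add_right
    rw [Nat.cast_le, CC_succ]
    omega
  · exact le_trans (limadd hl hlt _).le (le_self_add)

end TauAux3

namespace TauAux4

variable {G : Type} [Group G]

def Big {n : ℕ} (A : Fin n → Set G) (T : Finset G) : Set G :=
  ⋃ φ : G → Fin n, ⋂ t ∈ T, t • A (φ t)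

theorem mem_Big {n : ℕ} {A : Fin n → Set G} {T : Finset G} {z : G} :
    z ∈ Big A T ↔ ∃ φ : G → Fin n, ∀ t ∈ T, z ∈ t • A (φ t) := by
  simp [Big]

theorem smul_Big_inter_subset [DecidableEq G] {n : ℕ} (A : Fin n → Set G) (T : Finset G)
    (x y : G) :
    (x • Big A T) ∩ (y • Big A T) ⊆ Big A ((x • T) ∪ (y • T)) := by
  rintro z ⟨hz1, hz2⟩
  rw [Set.mem_smul_set_iff_inv_smul_mem] at hz1 hz2
  obtain ⟨φ, hφ⟩ := mem_Big.mp hz1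
  obtain ⟨ψ, hψ⟩ := mem_Big.mp hz2
  refine mem_Big.mpr ⟨fun u => if u ∈ x • T then φ (x⁻¹ * u) else ψ (y⁻¹ * u), ?_⟩
  intro u hu
  by_cases hx : u ∈ x • T
  · simp only [if_pos hx]
    obtain ⟨t, ht, rfl⟩ := Finset.mem_smul_finset.mp hx
    have h1 := hφ t ht
    simp only [smul_eq_mul, inv_mul_cancel_left]
    rw [mul_smul, Set.mem_smul_set_iff_inv_smul_mem]
    exact h1
  · simp only [if_neg hx]
    have hy : u ∈ y • T := (Finset.mem_union.mp hu).resolve_left hx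
    obtain ⟨t, ht, rfl⟩ := Finset.mem_smul_finset.mp hy
    have h1 := hψ t ht
    simp only [smul_eq_mul, inv_mul_cancel_left]
    rw [mul_smul, Set.mem_smul_set_iff_inv_smul_mem]
    exact h1

end TauAux4
namespace TauMain
open TauAux TauAux2 TauAux3 TauAux4

variable {G : Type} [Group G] {F : Set (Set G)}

theorem unionF (hadd : ∀ A B : Set G, A ∈ F → B ∈ F → A ∪ B ∈ F)
    {ι : Type} (f : ι → Set G) :
    ∀ S : Finset ι, S.Nonempty → (∀ s ∈ S, f s ∈ F) → ⋃ s ∈ S, f s ∈ F := by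
  classical
  intro S
  induction S using Finset.induction_on with
  | empty => intro h; simp at h
  | insert _ _ ha IH =>
    rename_i a S'
    intro _ h
    rcases S'.eq_empty_or_nonempty with rfl | hne
    · simpa using h a (by simp)
    · rw [Finset.set_biUnion_insert]
      exact hadd _ _ (h a (by simp)) (IH hne (fun s hs => h s (by simp [hs])))

theorem main (htf : ∀ g : G, g ≠ 1 → ¬IsOfFinOrder g) (hli : LeftInvariant F) (hlo : Lower F)
    (hadd : ∀ A B : Set G, A ∈ F → B ∈ F → A ∪ B ∈ F) :
    ∀ m : Ordinal, ∀ d n : ℕ, 0 < n → ∀ A : Fin n → Set G, (∀ i, A i ∈ tauIter F m) →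
    ∀ T : Finset G, T.Nonempty → n < T.card + d → T.card ≤ 2 * (n + 1) →
    Big A T ∈ tauIter F (m + ((CC m n + d : ℕ) : Ordinal)) := by
  classical
  intro m
  induction m using Ordinal.induction with
  | _ m IHm =>
  have bottom : ∀ d n : ℕ, 0 < n → ∀ A : Fin n → Set G, (∀ i, A i ∈ tauIter F m) →
      ∀ T : Finset G, T.Nonempty → n < T.card → T.card ≤ 2 * (n + 1) →
      Big A T ∈ tauIter F (m + ((CC m n + d : ℕ) : Ordinal)) := by
    intro d n hn A hA T hT hcard h2
    set S : Finset (Fin n × G × G) :=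
      (Finset.univ ×ˢ T ×ˢ T).filter (fun s => s.2.1 ≠ s.2.2) with hSdef
    set D : Fin n × G × G → Set G := fun s => s.2.1 • A s.1 ∩ s.2.2 • A s.1 with hDdef
    have hsub : Big A T ⊆ ⋃ s ∈ S, D s := by
      intro z hz
      obtain ⟨φ, hφ⟩ := mem_Big.mp hz
      obtain ⟨t, ht, t', ht', htt', he⟩ := Finset.exists_ne_map_eq_of_card_lt_of_maps_to
        (t := (Finset.univ : Finset (Fin n))) (by simpa using hcard)
        (fun a _ => Finset.mem_univ (φ a))
      have hmem : ((φ t, t, t') : Fin n × G × G) ∈ S := by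
        simp [hSdef, Finset.mem_filter, Finset.mem_product, ht, ht', htt']
      refine Set.mem_biUnion hmem ⟨hφ t ht, ?_⟩
      have h3 := hφ t' ht'
      rw [← he] at h3
      exact h3
    have hSne : S.Nonempty := by
      obtain ⟨a, ha, b, hb, hab⟩ := Finset.one_lt_card.mp (by omega : 1 < T.card)
      exact ⟨(⟨0, hn⟩, a, b), by simp [hSdef, Finset.mem_filter, Finset.mem_product, ha, hb, hab]⟩
    rcases eq_or_ne m 0 with rfl | hm
    · have hDF : ∀ s ∈ S, D s ∈ F := by
        intro s _
        have hAF : A s.1 ∈ F := by rw [← tauIter_zero F]; exact hA s.1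
        exact hlo _ _ Set.inter_subset_left (hli _ hAF s.2.1)
      have hU : ⋃ s ∈ S, D s ∈ F := unionF hadd D S hSne hDF
      have hBF : Big A T ∈ F := hlo _ _ hsub hU
      refine tauIter_mono hli hlo zero_le ?_
      rwa [tauIter_zero]
    · have hch : ∀ s : {s // s ∈ S}, ∃ β, β < m ∧ D s.1 ∈ tauIter F β := by
        rintro ⟨⟨i, t, t'⟩, hs⟩
        have htt' : t ≠ t' := (Finset.mem_filter.mp hs).2
        exact tauIter_pos_spec hm (hA i) htt'
      choose β hβ hDβ using hch
      set m' := (Finset.univ : Finset {s // s ∈ S}).sup β with hm'def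
      have hm'lt : m' < m := by
        rw [hm'def, Finset.sup_lt_iff (pos_iff_ne_zero.mpr hm)]
        exact fun b _ => hβ b
      set n' := S.card with hn'def
      have hn' : 0 < n' := Finset.card_pos.mpr hSne
      set A' : Fin n' → Set G := fun i => D (S.equivFin.symm i).1 with hA'def
      have hA' : ∀ i, A' i ∈ tauIter F m' :=
        fun i => tauIter_mono hli hlo (Finset.le_sup (Finset.mem_univ _)) (hDβ _)
      have hBig' : Big A' ({1} : Finset G) = ⋃ s ∈ S, D s := by
        ext z
        rw [mem_Big]
        constructor
        · rintro ⟨φ, hφ⟩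
          have h1 := hφ 1 (Finset.mem_singleton_self 1)
          rw [one_smul, hA'def] at h1
          exact Set.mem_biUnion (S.equivFin.symm (φ 1)).2 h1
        · intro hz
          rw [Set.mem_iUnion₂] at hz
          obtain ⟨s, hs, hzs⟩ := hz
          refine ⟨fun _ => S.equivFin ⟨s, hs⟩, ?_⟩
          intro t ht
          rw [Finset.mem_singleton] at ht
          subst ht
          rw [one_smul, hA'def]
          simpa using hzs
      have happ := IHm m' hm'lt n' n' hn' A' hA' {1} (Finset.singleton_nonempty 1)
        (by rw [Finset.card_singleton]; omega) (by rw [Finset.card_singleton]; omega)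
      rw [hBig'] at happ
      have hn'P : n' ≤ P n := by
        have h3 : S.card ≤ n * (T.card * T.card) := by
          calc S.card ≤ ((Finset.univ : Finset (Fin n)) ×ˢ T ×ˢ T).card :=
              Finset.card_filter_le _ _
            _ = n * (T.card * T.card) := by simp [Finset.card_product]
        calc n' ≤ n * (T.card * T.card) := h3
          _ ≤ n * ((2*(n+1)) * (2*(n+1))) := Nat.mul_le_mul_left n (Nat.mul_le_mul h2 h2)
          _ = P n := by unfold P; ring
      have hle : m' + ((CC m' n' + n' : ℕ) : Ordinal)
          ≤ m + ((CC m n + d : ℕ) : Ordinal) :=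
        le_trans (KEY hm'lt hn'P)
          (add_le_add_right (by rw [Nat.cast_le]; omega) m)
      exact tauIter_lower hlo _ _ _ hsub (tauIter_mono hli hlo hle happ)
  intro d
  induction d with
  | zero =>
    intro n hn A hA T hT h1 h2
    exact bottom 0 n hn A hA T hT (by omega) h2
  | succ d IHd =>
    intro n hn A hA T hT h1 h2
    by_cases hcard : n < T.card
    · exact bottom (d+1) n hn A hA T hT hcard h2
    · push_neg at hcard
      have hpos : m + ((CC m n + (d+1) : ℕ) : Ordinal) ≠ 0 := by
        have h0 : (0:Ordinal) < ((CC m n + (d+1) : ℕ) : Ordinal) := by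
          exact_mod_cast (by omega : 0 < CC m n + (d+1))
        exact (lt_of_lt_of_le h0 (le_add_self)).ne'
      apply mem_tauIter_of_pos hpos
      intro x y hxy
      refine ⟨m + ((CC m n + d : ℕ) : Ordinal), ?_, ?_⟩
      · exact add_lt_add_right (by rw [Nat.cast_lt]; omega) m
      · apply tauIter_lower hlo _ _ _ (smul_Big_inter_subset A T x y)
        obtain ⟨t0, ht0⟩ := hT
        apply IHd n hn A hA ((x • T) ∪ (y • T))
          ⟨x • t0, Finset.mem_union_left _ (Finset.smul_mem_smul_finset ht0)⟩
        · have hg := card_lt_union_smul htf hxy T ⟨t0, ht0⟩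
          omega
        · calc ((x • T) ∪ (y • T)).card ≤ (x • T).card + (y • T).card :=
              Finset.card_union_le _ _
            _ = T.card + T.card := by rw [Finset.card_smul_finset, Finset.card_smul_finset]
            _ ≤ 2 * (n + 1) := by omega

end TauMain
namespace TauFinal
open TauAux TauAux2 TauAux3 TauAux4 TauMain

variable {G : Type} [Group G] {F : Set (Set G)}

theorem mem_tauOp {X : Set (Set G)} {A : Set G} :
    A ∈ tauOp X ↔ ∀ x y : G, x ≠ y → x • A ∩ y • A ∈ X := Iff.rfl

theorem mem_tauLT {α : Ordinal} {A : Set G} :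
    A ∈ tauLT F α ↔ ∃ β < α, A ∈ tauIter F β := Iff.rfl

theorem union2 (htf : ∀ g : G, g ≠ 1 → ¬IsOfFinOrder g) (hli : LeftInvariant F) (hlo : Lower F)
    (hadd : ∀ A B : Set G, A ∈ F → B ∈ F → A ∪ B ∈ F) (m : Ordinal) {A B : Set G}
    (hA : A ∈ tauIter F m) (hB : B ∈ tauIter F m) :
    A ∪ B ∈ tauIter F (m + ((CC m 2 + 2 : ℕ) : Ordinal)) := by
  classical
  have hfam : ∀ i : Fin 2, (![A, B]) i ∈ tauIter F m := by
    intro i; fin_cases i <;> simpa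
  have h := main htf hli hlo hadd m 2 2 (by omega) ![A, B] hfam {1}
    (Finset.singleton_nonempty 1) (by rw [Finset.card_singleton]; omega)
    (by rw [Finset.card_singleton]; omega)
  have heq : Big ![A, B] ({1} : Finset G) = A ∪ B := by
    ext z
    rw [mem_Big]
    constructor
    · rintro ⟨φ, hφ⟩
      have h1 := hφ 1 (Finset.mem_singleton_self 1)
      rw [one_smul] at h1
      have hss : ∀ i : Fin 2, (![A, B]) i ⊆ A ∪ B := by
        intro i; fin_cases i
        · exact Set.subset_union_left
        · exact Set.subset_union_right
      exact hss (φ 1) h1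
    · intro hz
      rcases hz with hz | hz
      · exact ⟨fun _ => 0, by
          intro t ht; rw [Finset.mem_singleton] at ht; subst ht; rw [one_smul]; simpa⟩
      · exact ⟨fun _ => 1, by
          intro t ht; rw [Finset.mem_singleton] at ht; subst ht; rw [one_smul]; simpa⟩
  rwa [heq] at h

theorem part1 (htf : ∀ g : G, g ≠ 1 → ¬IsOfFinOrder g) (hli : LeftInvariant F) (hlo : Lower F)
    (hadd : ∀ A B : Set G, A ∈ F → B ∈ F → A ∪ B ∈ F) :
    ∀ α : Ordinal, Order.IsSuccLimit α → ∀ A B : Set G, A ∈ tauLT F α → B ∈ tauLT F α →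
      A ∪ B ∈ tauLT F α := by
  rintro α hα A B ⟨β₁, hβ₁, hA⟩ ⟨β₂, hβ₂, hB⟩
  have hA' := tauIter_mono hli hlo (le_max_left β₁ β₂) hA
  have hB' := tauIter_mono hli hlo (le_max_right β₁ β₂) hB
  exact ⟨max β₁ β₂ + ((CC (max β₁ β₂) 2 + 2 : ℕ) : Ordinal),
    limadd hα (max_lt hβ₁ hβ₂) _, union2 htf hli hlo hadd _ hA' hB'⟩

theorem F_subset_tauStar : F ⊆ tauStar F :=
  fun _ hA => Set.mem_sInter.mpr (fun _ hT => hT.1 hA)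

theorem tauOp_tauStar : tauOp (tauStar F) = tauStar F := by
  ext A
  constructor
  · intro hA
    refine Set.mem_sInter.mpr fun T hT => ?_
    have h1 : A ∈ tauOp T := fun x y hxy => Set.mem_sInter.mp (hA x y hxy) T hT
    rwa [hT.2] at h1
  · intro hA
    refine mem_tauOp.mpr fun x y hxy => ?_
    refine Set.mem_sInter.mpr fun T hT => ?_
    have h1 : A ∈ T := Set.mem_sInter.mp hA T hT
    rw [← hT.2] at h1
    exact h1 x y hxy

theorem tauStar_thinComplete : ThinComplete (tauStar F) := tauOp_tauStar

theorem tauStar_min {T : Set (Set G)} (h1 : F ⊆ T) (h2 : ThinComplete T) :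
    tauStar F ⊆ T := Set.sInter_subset_of_mem ⟨h1, h2⟩

theorem tauStar_trans (hli : LeftInvariant F) (hlo : Lower F) :
    ∀ A ∈ tauStar F, ∀ (x : G) (B : Set G), B ⊆ x • A → B ∈ tauStar F := by
  set W : Set (Set G) := {A | ∀ (x : G) (B : Set G), B ⊆ x • A → B ∈ tauStar F} with hW
  have memW : ∀ {C : Set G}, C ∈ W ↔ ∀ (x : G) (B : Set G), B ⊆ x • C → B ∈ tauStar F :=
    fun {C} => Iff.rfl
  have hFW : F ⊆ W := fun A hA => memW.mpr
    (fun x B hB => F_subset_tauStar (hlo B (x • A) hB (hli A hA x)))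
  have hWtc : ThinComplete W := by
    unfold ThinComplete
    ext A
    constructor
    · intro hA
      refine memW.mpr fun x B hB => ?_
      rw [← tauOp_tauStar]
      refine mem_tauOp.mpr fun u v huv => ?_
      have h2 : (u * x) • A ∩ (v * x) • A ∈ W :=
        mem_tauOp.mp hA (u * x) (v * x) (fun h => huv (mul_right_cancel h))
      refine memW.mp h2 1 _ ?_
      rw [one_smul]
      refine Set.inter_subset_inter ?_ ?_
      · exact (Set.smul_set_mono hB).trans (le_of_eq (smul_smul u x A))
      · exact (Set.smul_set_mono hB).trans (le_of_eq (smul_smul v x A))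
    · intro hA
      refine mem_tauOp.mpr fun x y hxy => ?_
      refine memW.mpr fun u B hB => ?_
      refine memW.mp hA (u * x) B (hB.trans ?_)
      calc u • (x • A ∩ y • A) ⊆ u • (x • A) := Set.smul_set_mono Set.inter_subset_left
        _ = (u * x) • A := smul_smul u x A
  intro A hA x B hB
  exact memW.mp (tauStar_min hFW hWtc hA) x B hB

theorem tauIter_subset_tauStar (hli : LeftInvariant F) (hlo : Lower F) :
    ∀ m, tauIter F m ⊆ tauStar F := by
  intro m
  induction m using Ordinal.induction with
  | _ m IH =>
  intro A hA
  rcases eq_or_ne m 0 with rfl | hm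
  · exact F_subset_tauStar (by rwa [tauIter_zero] at hA)
  · rw [← tauOp_tauStar]
    refine mem_tauOp.mpr fun x y hxy => ?_
    obtain ⟨β, hβ, h⟩ := tauIter_pos_spec hm hA hxy
    exact IH β hβ h

theorem tauStar_eq (hli : LeftInvariant F) (hlo : Lower F) :
    ∃ α : Ordinal, Order.IsSuccLimit α ∧ tauStar F = tauLT F α := by
  classical
  set κ := max (Cardinal.lift.{u_1, 0} (Cardinal.mk (G × G))) Cardinal.aleph0 with hκ
  set α := (Order.succ κ).ord with hα
  have hreg := Cardinal.isRegular_succ (c := κ) (le_max_right _ _)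
  have hlim : Order.IsSuccLimit α := Cardinal.isSuccLimit_ord ((le_max_right _ _).trans (Order.le_succ κ))
  refine ⟨α, hlim, ?_⟩
  have hLT_tc : ThinComplete (tauLT F α) := by
    unfold ThinComplete
    ext A
    constructor
    · intro hA
      have hch : ∀ p : G × G, ∃ β, β < α ∧
          (p.1 ≠ p.2 → p.1 • A ∩ p.2 • A ∈ tauIter F β) := by
        rintro ⟨x, y⟩
        by_cases hxy : x = y
        · exact ⟨0, hlim.pos, fun h => absurd hxy h⟩
        · obtain ⟨β, hβ, h⟩ := mem_tauLT.mp (mem_tauOp.mp hA x y hxy)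
          exact ⟨β, hβ, fun _ => h⟩
      choose f hf1 hf2 using hch
      have hβ₀ : Ordinal.lsub f < α := by
        apply Ordinal.lsub_lt_ord_lift ?_ hf1
        rw [hreg.cof_eq]
        exact lt_of_le_of_lt (le_max_left _ _) (Order.lt_succ κ)
      refine mem_tauLT.mpr ⟨Ordinal.lsub f, hβ₀, ?_⟩
      apply mem_tauIter_of_pos
        (pos_iff_ne_zero.mp
          (lt_of_le_of_lt zero_le (Ordinal.lt_lsub f (1, 1))))
      intro x y hxy
      exact ⟨f (x, y), Ordinal.lt_lsub f (x, y), hf2 (x, y) hxy⟩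
    · intro hA
      obtain ⟨β, hβ, hAβ⟩ := mem_tauLT.mp hA
      refine mem_tauOp.mpr fun x y hxy => ?_
      rcases eq_or_ne β 0 with rfl | hb
      · rw [tauIter_zero] at hAβ
        exact mem_tauLT.mpr ⟨0, hlim.pos,
          by rw [tauIter_zero]; exact hlo _ _ Set.inter_subset_left (hli _ hAβ x)⟩
      · obtain ⟨γ, hγ, h⟩ := tauIter_pos_spec hb hAβ hxy
        exact mem_tauLT.mpr ⟨γ, hγ.trans hβ, h⟩
  apply Set.Subset.antisymm
  · exact tauStar_min (fun A hA => mem_tauLT.mpr ⟨0, hlim.pos, by rwa [tauIter_zero]⟩) hLT_tc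
  · rintro A hA
    obtain ⟨β, _, h⟩ := mem_tauLT.mp hA
    exact tauIter_subset_tauStar hli hlo β h

end TauFinal

theorem stmt_9 {G : Type} [Group G] (htf : ∀ g : G, g ≠ 1 → ¬IsOfFinOrder g)
    (F : Set (Set G)) (hli : LeftInvariant F) (hlo : Lower F)
    (hadd : ∀ A B : Set G, A ∈ F → B ∈ F → A ∪ B ∈ F) :
    (∀ α : Ordinal, Order.IsSuccLimit α →
      ∀ A B : Set G, A ∈ tauLT F α → B ∈ tauLT F α → A ∪ B ∈ tauLT F α) ∧
    (∀ A B : Set G, A ∈ tauStar F → B ∈ tauStar F → A ∪ B ∈ tauStar F) ∧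
    Lower (tauStar F) := by
  classical
  refine ⟨TauFinal.part1 htf hli hlo hadd, ?_, ?_⟩
  · intro A B hA hB
    obtain ⟨α, hlim, heq⟩ := TauFinal.tauStar_eq.{0} (F := F) hli hlo
    rw [heq] at hA hB ⊢
    exact TauFinal.part1 htf hli hlo hadd α hlim A B hA hB
  · intro A B hAB hB
    exact TauFinal.tauStar_trans hli hlo B hB 1 A (by rwa [one_smul])
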